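/- Let a, b, c, d be integers with a, b, c, d ≥ 2. Set ρ = gcd(a-1, b) and assume: ρ ≥ 2; gcd(c-1, d-1) = ρ - 1; min(a-1, b) = min(c, d) = c; (ρ-1)(a-1+b) = ρ(c+d-2); and (ρ-1)·ab = ρ·(cd - 1). Then b = c = ρ and ρ(d-1) = (a-1)(ρ-1); in particular, gcd(a-1,b) = b = min(a-1,b) and gcd(c-1,d-1) = c-1 divides d-1. -/

import Mathlib

/-- The arithmetic core of the comparison of chain-type and loop-type links:
equality of the contact invariants `ρ`, `λ`, `κ`, `σ` forces `b = c = ρ` and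
`ρ(d-1) = (a-1)(ρ-1)`; in particular `gcd(a-1,b) = b = min(a-1,b)` and
`gcd(c-1,d-1) = c-1` divides `d-1`. -/
theorem chain_vs_loop_arithmetic (a b c d ρ : ℤ) (ha : 2 ≤ a) (hb : 2 ≤ b)
    (hc : 2 ≤ c) (hd : 2 ≤ d)
    (hρdef : ρ = (Int.gcd (a - 1) b : ℤ)) (hρ2 : 2 ≤ ρ)
    (hgcd : (Int.gcd (c - 1) (d - 1) : ℤ) = ρ - 1)
    (hmin : min (a - 1) b = min c d) (hminc : min c d = c)
    (hκ : (ρ - 1) * (a - 1 + b) = ρ * (c + d - 2))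
    (hσ : (ρ - 1) * (a * b) = ρ * (c * d - 1)) :
    b = ρ ∧ c = ρ ∧ ρ * (d - 1) = (a - 1) * (ρ - 1) ∧
      (Int.gcd (a - 1) b : ℤ) = b ∧ b = min (a - 1) b ∧
      (Int.gcd (c - 1) (d - 1) : ℤ) = c - 1 ∧ (c - 1) ∣ (d - 1) := by
  obtain ⟨A, hA⟩ : ρ ∣ a - 1 := hρdef ▸ Int.gcd_dvd_left (a - 1) b
  obtain ⟨B, hB⟩ : ρ ∣ b := hρdef ▸ Int.gcd_dvd_right (a - 1) b
  obtain ⟨C, hC⟩ : ρ - 1 ∣ c - 1 := hgcd ▸ Int.gcd_dvd_left (c - 1) (d - 1)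
  obtain ⟨D, hD⟩ : ρ - 1 ∣ d - 1 := hgcd ▸ Int.gcd_dvd_right (c - 1) (d - 1)
  have hρ0 : (0:ℤ) < ρ := by linarith
  have hρ1 : (0:ℤ) < ρ - 1 := by linarith
  have hne : ρ * (ρ - 1) ≠ 0 := by positivity
  have hA1 : 1 ≤ A := by nlinarith
  have hB1 : 1 ≤ B := by nlinarith
  have hC1 : 1 ≤ C := by nlinarith
  have hD1 : 1 ≤ D := by nlinarith
  -- the two reduced equations
  have key1 : A + B = C + D := by
    have h : ρ * (ρ - 1) * (A + B) = ρ * (ρ - 1) * (C + D) := by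
      linear_combination hκ - (ρ - 1) * hA - (ρ - 1) * hB + ρ * hC + ρ * hD
    exact mul_left_cancel₀ hne h
  have star : (ρ - 1) * ((a - 1) * (b - 1)) = ρ * ((c - 1) * (d - 1)) := by
    linear_combination hσ - hκ
  have key2 : A * (ρ * B - 1) = (ρ - 1) * (C * D) := by
    have h : ρ * (ρ - 1) * (A * (ρ * B - 1)) = ρ * (ρ - 1) * ((ρ - 1) * (C * D)) := by
      linear_combination star - (ρ - 1) * (b - 1) * hA - (ρ - 1) * ρ * A * hB
        + ρ * (d - 1) * hC + ρ * ((ρ - 1) * C) * hD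
    exact mul_left_cancel₀ hne h
  rcases le_or_gt b (a - 1) with hba | hab
  · -- b ≤ a - 1 : c = b
    have hcb : c = b := by
      rw [← hminc, ← hmin, min_eq_right hba]
    have hC' : ρ * B - 1 = (ρ - 1) * C := by
      rw [← hB, ← hcb]; linarith [hC]
    have hAD : A = D := by
      have h : ((ρ - 1) * C) * A = ((ρ - 1) * C) * D := by
        linear_combination key2 - A * hC'
      exact mul_left_cancel₀ (by positivity) h
    have hCB : C = B := by linarith [key1, hAD]
    have hBone : B = 1 := by
      have := hC'
      rw [hCB] at this
      linarith
    have hbρ : b = ρ := by rw [hB, hBone, mul_one]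
    refine ⟨hbρ, hcb.trans hbρ, ?_, ?_, ?_, ?_, ?_⟩
    · rw [hD, hA, ← hAD]; ring
    · rw [← hρdef, ← hbρ]
    · exact (min_eq_right hba).symm
    · rw [hgcd, hcb.trans hbρ]
    · rw [hD]
      exact ⟨D, by rw [hcb.trans hbρ]⟩
  · -- a - 1 < b : leads to a contradiction
    exfalso
    have hca : c = a - 1 := by
      rw [← hminc, ← hmin, min_eq_left hab.le]
    have hC' : ρ * A - 1 = (ρ - 1) * C := by
      rw [← hA, ← hca]; linarith [hC]
    have hco : IsCoprime A (ρ * A - 1) := ⟨ρ, -1, by ring⟩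
    have hdvd : A ∣ (ρ * A - 1) * D := ⟨ρ * B - 1, by linear_combination -key2 + D * hC'⟩
    obtain ⟨E, hE⟩ : A ∣ D := hco.dvd_of_dvd_mul_left hdvd
    have hAne : A ≠ 0 := by linarith
    have hEq : ρ * B - 1 = (ρ * A - 1) * E := by
      have h : A * (ρ * B - 1) = A * ((ρ * A - 1) * E) := by
        linear_combination key2 - D * hC' + (ρ * A - 1) * hE
      exact mul_left_cancel₀ hAne h
    have hE1 : 1 ≤ E := by nlinarith
    have hCE : C + E = 2 := by
      linear_combination (-ρ) * key1 - ρ * hE + hEq + hC'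
    have hCone : C = 1 := by linarith
    have hEone : E = 1 := by linarith
    have hAone : A = 1 := by
      have h : ρ * A = ρ * 1 := by rw [hCone] at hC'; linarith
      exact mul_left_cancel₀ (by linarith : ρ ≠ 0) h
    have hBone : B = 1 := by
      have h : ρ * B = ρ * 1 := by rw [hEone, hAone] at hEq; linarith
      exact mul_left_cancel₀ (by linarith : ρ ≠ 0) h
    rw [hA, hB, hAone, hBone] at hab
    linarith
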